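/- Let b_n ∈ ℚ be the coefficient of xⁿ in c²·(1 - x²·c³)⁻¹ (the diagonal sums of the unsigned Riordan array (c², x·c³), the sequence beginning 1, 2, 6, 19, 63, 215, …). Then for every n ≥ 0, det(b_{i+j})_{0≤i,j≤n} = F_{2n+1}, where F_m denotes the m-th Fibonacci number. -/

import Mathlib

open PowerSeries Finset

namespace Stmt8aux

noncomputable section

def fq (m : ℕ) : ℚ := (Nat.fib m : ℚ)

def Bst (c : PowerSeries ℚ) (s t : ℚ) : PowerSeries ℚ :=
  ((C t)^3 * (c^2 + c) - C s * C t * (C s + C t)) *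
    ((C s + 2 * C t) * ((C t - C s) * C t) + (C s + 2 * C t) * (C s)^2 * X)⁻¹

def Bs (c : PowerSeries ℚ) : ℕ → PowerSeries ℚ
  | 0 => c ^ 2 * (1 - X ^ 2 * c ^ 3)⁻¹
  | k+1 => Bst c (fq (2*k)) (fq (2*k+1))

def aa : ℕ → ℚ
  | 0 => 2
  | k+1 => 2 - 1 / (fq (2*k+1) * fq (2*k+3))

def lam : ℕ → ℚ
  | 0 => 1
  | 1 => 2
  | k+2 => (3 * fq (2*k) + 5 * fq (2*k+1)) * fq (2*k+1) / (fq (2*k) + 2 * fq (2*k+1))^2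

def dd : ℕ → ℚ
  | 0 => 1
  | k+1 => lam (k+1) * dd k

def Qs : ℕ → PowerSeries ℚ
  | 0 => 1
  | 1 => 1 - C (aa 0) * X
  | k+2 => (1 - C (aa (k+1)) * X) * Qs (k+1) - C (lam (k+1)) * X^2 * Qs k

def us : ℕ → PowerSeries ℚ
  | 0 => 0
  | 1 => 1
  | k+2 => (1 - C (aa (k+1)) * X) * us (k+1) - C (lam (k+1)) * X^2 * us k

def Gs (c : PowerSeries ℚ) : ℕ → PowerSeries ℚ
  | 0 => c ^ 2 * (1 - X ^ 2 * c ^ 3)⁻¹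
  | k+1 => C (lam (k+1)) * Gs c k * Bs c (k+1)

lemma fq_add_two (m : ℕ) : fq (m+2) = fq m + fq (m+1) := by
  unfold fq; rw [Nat.fib_add_two]; push_cast; ring

lemma fq_nonneg (m : ℕ) : 0 ≤ fq m := by unfold fq; positivity

lemma fq_pos (m : ℕ) : 0 < fq (m+1) := by
  unfold fq; exact_mod_cast Nat.fib_pos.mpr (Nat.succ_pos m)

lemma fq_lt (k : ℕ) : fq (2*k) < fq (2*k+1) := by
  cases k with
  | zero => norm_num [fq]
  | succ k =>
      unfold fq
      exact_mod_cast Nat.fib_lt_fib_succ (n := 2*(k+1)) (by omega)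

lemma cassini : ∀ k, fq (2*k)^2 + fq (2*k) * fq (2*k+1) - fq (2*k+1)^2 = -1
  | 0 => by norm_num [fq]
  | k+1 => by
      have ih := cassini k
      have h2 : fq (2*(k+1)) = fq (2*k) + fq (2*k+1) := by
        rw [show 2*(k+1) = 2*k+2 by ring]; exact fq_add_two _
      have h3 : fq (2*(k+1)+1) = fq (2*k) + 2 * fq (2*k+1) := by
        rw [show 2*(k+1)+1 = (2*k+1)+2 by ring, fq_add_two,
          show 2*k+1+1 = 2*k+2 by ring, fq_add_two]; ring
      rw [h2, h3]; linear_combination ih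

lemma key_core (c S T A L N1 D1 N2 D2 I1 I2 : PowerSeries ℚ)
    (hc : c = 1 + X * c^2)
    (hstC : S^2 + S*T - T^2 = -1)
    (hN1 : N1 = T^3*(c^2+c) - S*T*(S+T))
    (hD1e : D1 = (S+2*T)*((T-S)*T) + (S+2*T)*S^2*X)
    (hN2 : N2 = (S+2*T)^3*(c^2+c) - (S+T)*(S+2*T)*((S+T)+(S+2*T)))
    (hD2e : D2 = ((S+T)+2*(S+2*T))*(((S+2*T)-(S+T))*(S+2*T)) + ((S+T)+2*(S+2*T))*(S+T)^2*X)
    (hI1 : D1 * I1 = 1) (hI2 : D2 * I2 = 1)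
    (hA : A * (T*(S+2*T)) = 2*(T*(S+2*T)) - 1)
    (hL : L * (S+2*T)^2 = (3*S+5*T)*T)
    (hZ : D1 * D2 * (T*(S+2*T)) * (S+2*T)^2 ≠ 0) :
    (1 - A*X) * (N1*I1) = 1 + L*X^2*(N1*I1)*(N2*I2) := by
  have hM : (T*(S+2*T)*(S+2*T)^2 - (2*(T*(S+2*T))-1)*(S+2*T)^2*X)*N1*D2
      = T*(S+2*T)*(S+2*T)^2*(D1*D2) + T*(S+2*T)*((3*S+5*T)*T)*X^2*(N1*N2) := by
    rw [hN1, hD1e, hN2, hD2e]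
    linear_combination ((3)*c*X^2*S^5*T^3 + (23)*c*X^2*S^4*T^4 + (69)*c*X^2*S^3*T^5 + (101)*c*X^2*S^2*T^6 + (72)*c*X^2*S*T^7 + (20)*c*X^2*T^8 + (3)*c*X*S^5*T^3 + (26)*c*X*S^4*T^4 + (92)*c*X*S^3*T^5 + (167)*c*X*S^2*T^6 + (156)*c*X*S*T^7 + (60)*c*X*T^8 + (3)*c*S^4*T^4 + (23)*c*S^3*T^5 + (66)*c*S^2*T^6 + (84)*c*S*T^7 + (40)*c*T^8 + (-3)*X^2*S^7*T + (-26)*X^2*S^6*T^2 + (-92)*X^2*S^5*T^3 + (-170)*X^2*S^4*T^4 + (-173)*X^2*S^3*T^5 + (-92)*X^2*S^2*T^6 + (-20)*X^2*S*T^7 + (-3)*X*S^6*T^2 + (-29)*X*S^5*T^3 + (-112)*X*S^4*T^4 + (-219)*X*S^3*T^5 + (-225)*X*S^2*T^6 + (-112)*X*S*T^7 + (-20)*X*T^8 + (-3)*S^4*T^4 + (-23)*S^3*T^5 + (-66)*S^2*T^6 + (-84)*S*T^7 + (-40)*T^8) * hstC + ((3)*c^2*X*S^5*T^5 + (29)*c^2*X*S^4*T^6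 + (112)*c^2*X*S^3*T^7 + (216)*c^2*X*S^2*T^8 + (208)*c^2*X*S*T^9 + (80)*c^2*X*T^10 + (6)*c*X*S^5*T^5 + (58)*c*X*S^4*T^6 + (224)*c*X*S^3*T^7 + (432)*c*X*S^2*T^8 + (416)*c*X*S*T^9 + (160)*c*X*T^10 + (3)*c*S^5*T^5 + (29)*c*S^4*T^6 + (112)*c*S^3*T^7 + (216)*c*S^2*T^8 + (208)*c*S*T^9 + (80)*c*T^10 + (-3)*X*S^7*T^3 + (-26)*X*S^6*T^4 + (-86)*X*S^5*T^5 + (-3)*X*S^5*T^3 + (-118)*X*S^4*T^6 + (-23)*X*S^4*T^4 + (8)*X*S^3*T^7 + (-69)*X*S^3*T^5 + (225)*X*S^2*T^8 + (-101)*X*S^2*T^6 + (260)*X*S*T^9 + (-72)*X*S*T^7 + (100)*X*T^10 + (-20)*X*T^8 + (-3)*S^6*T^4 + (-20)*S^5*T^5 + (-28)*S^4*T^6 + (-3)*S^4*T^4 + (97)*S^3*T^7 + (-23)*S^3*T^5 + (374)*S^2*T^8 + (-66)*S^2*T^6 + (460)*S*T^9 + (-84)*S*T^7 + (200)*T^10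 + (-40)*T^8) * hc
  apply mul_right_cancel₀ hZ
  linear_combination hM - N1*D2*(S+2*T)^2*X*hA - X^2*N1*N2*(T*(S+2*T))*hL
    + ((1-A*X)*N1*D2*(T*(S+2*T))*(S+2*T)^2 - L*X^2*N1*N2*(T*(S+2*T))*(S+2*T)^2*(D2*I2))*hI1
    - L*X^2*N1*N2*(T*(S+2*T))*(S+2*T)^2*hI2



lemma ne_zero_of_cc {φ : PowerSeries ℚ} (h : constantCoeff φ ≠ 0) : φ ≠ 0 :=
  fun h0 => h (by simp [h0])

lemma key (c : PowerSeries ℚ) (hc : c = 1 + X * c^2) (k : ℕ) :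
    (1 - C (aa (k+1)) * X) * Bs c (k+1)
      = 1 + C (lam (k+2)) * X^2 * Bs c (k+1) * Bs c (k+2) := by
  have hs := fq_nonneg (2*k)
  have hlt := fq_lt k
  set s := fq (2*k) with hsdef
  set t := fq (2*k+1) with htdef
  have ht : 0 < t := lt_of_le_of_lt hs hlt
  have hts : 0 < t - s := by linarith
  have hs2t : 0 < s + 2*t := by linarith
  have h3s5t : 0 < 3*s + 5*t := by linarith

  have hstq : s^2 + s*t - t^2 = -1 := cassini k
  have hstC : (C s)^2 + C s * C t - (C t)^2 = -1 := by
    have := congrArg C hstq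
    simpa [map_add, map_sub, map_mul, map_pow, map_neg, map_one] using this
  -- constant coefficients of denominators
  have hd1c : (s+2*t)*((t-s)*t) ≠ 0 := by positivity
  have hd2c : ((s+t)+2*(s+2*t))*(((s+2*t)-(s+t))*(s+2*t)) ≠ 0 := by
    have h1 : (0:ℚ) < (s+t)+2*(s+2*t) := by linarith
    have h2' : (0:ℚ) < ((s+2*t)-(s+t))*(s+2*t) := by
      have : (s+2*t)-(s+t) = t := by ring
      rw [this]; positivity
    positivity
  have hD1cc : constantCoeff ((C s + 2 * C t) * ((C t - C s) * C t)
      + (C s + 2 * C t) * (C s)^2 * X) = (s+2*t)*((t-s)*t) := by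
    simp [map_add, map_sub, map_mul, map_pow, constantCoeff_X, map_ofNat, constantCoeff_C]
  have hD2cc : constantCoeff ((C (s+t) + 2 * C (s+2*t)) * ((C (s+2*t) - C (s+t)) * C (s+2*t))
      + (C (s+t) + 2 * C (s+2*t)) * (C (s+t))^2 * X)
      = ((s+t)+2*(s+2*t))*(((s+2*t)-(s+t))*(s+2*t)) := by
    simp [map_add, map_sub, map_mul, map_pow, constantCoeff_X, map_ofNat, constantCoeff_C]
  have hI1 : ((C s + 2 * C t) * ((C t - C s) * C t)
      + (C s + 2 * C t) * (C s)^2 * X) *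
      ((C s + 2 * C t) * ((C t - C s) * C t)
      + (C s + 2 * C t) * (C s)^2 * X)⁻¹ = 1 :=
    PowerSeries.mul_inv_cancel _ (by rw [hD1cc]; exact hd1c)
  have hI2 : ((C (s+t) + 2 * C (s+2*t)) * ((C (s+2*t) - C (s+t)) * C (s+2*t))
      + (C (s+t) + 2 * C (s+2*t)) * (C (s+t))^2 * X) *
      ((C (s+t) + 2 * C (s+2*t)) * ((C (s+2*t) - C (s+t)) * C (s+2*t))
      + (C (s+t) + 2 * C (s+2*t)) * (C (s+t))^2 * X)⁻¹ = 1 :=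
    PowerSeries.mul_inv_cancel _ (by rw [hD2cc]; exact hd2c)
  have h2' : fq (2*k+2) = s + t := fq_add_two _
  have h3' : fq (2*k+3) = s + 2*t := by
    rw [show 2*k+3 = (2*k+1)+2 by ring, fq_add_two,
      show 2*k+1+1 = 2*k+2 by ring, fq_add_two]; ring
  have hne : t*(s+2*t) ≠ 0 := by positivity
  have haq : aa (k+1) * (t*(s+2*t)) = 2*(t*(s+2*t)) - 1 := by
    simp only [aa, h3', ← htdef]
    field_simp
  have hAC : C (aa (k+1)) * (C t * (C s + 2*C t)) = 2*(C t*(C s + 2*C t)) - 1 := by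
    have := congrArg C haq
    simpa [map_add, map_sub, map_mul, map_pow, map_one, map_ofNat] using this
  have hlq : lam (k+2) * (s+2*t)^2 = (3*s+5*t)*t := by
    simp only [lam, ← hsdef, ← htdef]
    have hne2 : s+2*t ≠ 0 := ne_of_gt hs2t
    field_simp
  have hLC : C (lam (k+2)) * (C s + 2*C t)^2 = (3*C s + 5*C t)*C t := by
    have := congrArg C hlq
    simpa [map_add, map_sub, map_mul, map_pow, map_one, map_ofNat] using this
  have hBs2 : Bs c (k+2) = Bst c (s+t) (s+2*t) := by
    show Bst c (fq (2*(k+1))) (fq (2*(k+1)+1)) = _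
    rw [show 2*(k+1) = 2*k+2 by ring, show 2*k+2+1 = 2*k+3 by ring, h2', h3']
  rw [hBs2]
  show (1 - C (aa (k+1)) * X) * Bst c s t
      = 1 + C (lam (k+2)) * X^2 * Bst c s t * Bst c (s+t) (s+2*t)
  rw [Bst, Bst]
  refine key_core c (C s) (C t) (C (aa (k+1))) (C (lam (k+2)))
    _ _ _ _ _ _ hc hstC rfl rfl ?_ ?_ hI1 hI2 hAC hLC ?_
  · simp only [map_add, map_mul, map_ofNat]
  · simp only [map_add, map_mul, map_ofNat]
  · apply ne_zero_of_cc
    rw [map_mul, map_mul, map_mul, hD1cc, hD2cc]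
    refine mul_ne_zero (mul_ne_zero (mul_ne_zero hd1c hd2c) ?_) ?_
    · have : constantCoeff (C t * (C s + 2*C t)) = t*(s+2*t) := by
        simp [map_mul, map_add, map_ofNat]
      rw [this]
      exact ne_of_gt (mul_pos ht hs2t)
    · have : constantCoeff ((C s + 2*C t)^2) = (s+2*t)^2 := by
        simp [map_pow, map_add, map_mul, map_ofNat]
      rw [this]
      positivity



lemma key0_core (c W D0 Iw I0 : PowerSeries ℚ)
    (hc : c = 1 + X * c^2)
    (hW : W = 1 - X^2*c^3)
    (hD0 : D0 = ((0:ℚ⟦X⟧) + 2*1) * ((1-0)*1) + (0 + 2*1) * (0:ℚ⟦X⟧)^2 * X)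
    (hIw : W * Iw = 1) (hI0 : D0 * I0 = 1)
    (hZ : W * D0 ≠ 0) :
    (1 - 2*X) * (c^2 * Iw)
      = 1 + 2*X^2 * (c^2 * Iw) * (((1:ℚ⟦X⟧)^3 * (c^2+c) - 0*1*(0+1)) * I0) := by
  apply mul_right_cancel₀ hZ
  linear_combination 2*(c+1+X*c^2)*hc + ((1-2*X)*c^2 - (1-X^2*c^3))*hD0 - D0*hW
    + ((1-2*X)*c^2*D0 - 2*X^2*c^2*(c^2+c)*(D0*I0))*hIw - 2*X^2*c^2*(c^2+c)*hI0

lemma key0 (c : PowerSeries ℚ) (hc : c = 1 + X * c^2) :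
    (1 - C (aa 0) * X) * Bs c 0 = 1 + C (lam 1) * X^2 * Bs c 0 * Bs c 1 := by
  have h0 : fq 0 = 0 := by norm_num [fq]
  have h1 : fq 1 = 1 := by norm_num [fq]
  have hWcc : constantCoeff (1 - X^2*c^3) ≠ 0 := by simp
  have hIw : (1 - X^2*c^3) * (1 - X^2*c^3)⁻¹ = 1 := PowerSeries.mul_inv_cancel _ hWcc
  have hDcc : constantCoeff (((0:ℚ⟦X⟧) + 2*1) * ((1-0)*1) + (0 + 2*1) * (0:ℚ⟦X⟧)^2 * X) ≠ 0 := by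
    simp [map_ofNat]
  have hI0 : (((0:ℚ⟦X⟧) + 2*1) * ((1-0)*1) + (0 + 2*1) * (0:ℚ⟦X⟧)^2 * X) *
      (((0:ℚ⟦X⟧) + 2*1) * ((1-0)*1) + (0 + 2*1) * (0:ℚ⟦X⟧)^2 * X)⁻¹ = 1 :=
    PowerSeries.mul_inv_cancel _ hDcc
  have hZ : (1 - X^2*c^3) * (((0:ℚ⟦X⟧) + 2*1) * ((1-0)*1) + (0 + 2*1) * (0:ℚ⟦X⟧)^2 * X) ≠ 0 :=
    mul_ne_zero (ne_zero_of_cc hWcc) (ne_zero_of_cc hDcc)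
  have := key0_core c (1 - X^2*c^3) (((0:ℚ⟦X⟧) + 2*1) * ((1-0)*1) + (0 + 2*1) * (0:ℚ⟦X⟧)^2 * X)
    (1 - X^2*c^3)⁻¹ ((((0:ℚ⟦X⟧) + 2*1) * ((1-0)*1) + (0 + 2*1) * (0:ℚ⟦X⟧)^2 * X))⁻¹
    hc rfl rfl hIw hI0 hZ
  show (1 - C (aa 0) * X) * (c^2 * (1 - X^2*c^3)⁻¹)
      = 1 + C (lam 1) * X^2 * (c^2 * (1 - X^2*c^3)⁻¹) * Bst c (fq 0) (fq 1)
  rw [Bst, h0, h1]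
  simp only [map_zero, map_one, aa, lam, map_ofNat]
  exact this



lemma Gs_zero (c : PowerSeries ℚ) : Gs c 0 = Bs c 0 := rfl

lemma cc_Bs0 (c : PowerSeries ℚ) (hc0 : constantCoeff c = 1) :
    constantCoeff (Bs c 0) = 1 := by
  show constantCoeff (c^2 * (1 - X^2*c^3)⁻¹) = 1
  rw [map_mul, map_pow, hc0, PowerSeries.constantCoeff_inv]
  simp

lemma cc_Bs_succ (c : PowerSeries ℚ) (hc0 : constantCoeff c = 1) (k : ℕ) :
    constantCoeff (Bs c (k+1)) = 1 := by
  have hs := fq_nonneg (2*k)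
  have hlt := fq_lt k
  set s := fq (2*k) with hsdef
  set t := fq (2*k+1) with htdef
  have ht : 0 < t := lt_of_le_of_lt hs hlt
  show constantCoeff (Bst c s t) = 1
  rw [Bst, map_mul, PowerSeries.constantCoeff_inv]
  simp only [map_add, map_sub, map_mul, map_pow, constantCoeff_C, constantCoeff_X, hc0,
    map_ofNat, mul_zero, add_zero]
  rw [show t^3 * (1^2 + 1) - s*t*(s+t) = (s+2*t)*((t-s)*t) by ring]
  have hne : (s+2*t)*((t-s)*t) ≠ 0 := by
    have h1 : 0 < s + 2*t := by linarith
    have h2 : 0 < (t-s)*t := mul_pos (by linarith) ht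
    positivity
  have hts' : t - s ≠ 0 := sub_ne_zero.mpr (ne_of_gt hlt)
  field_simp

lemma cc_Gs (c : PowerSeries ℚ) (hc0 : constantCoeff c = 1) :
    ∀ k, constantCoeff (Gs c k) = dd k
  | 0 => by rw [Gs_zero, cc_Bs0 c hc0]; rfl
  | k+1 => by
      have ih := cc_Gs c hc0 k
      show constantCoeff (C (lam (k+1)) * Gs c k * Bs c (k+1)) = dd (k+1)
      rw [map_mul, map_mul, constantCoeff_C, ih, cc_Bs_succ c hc0 k]
      show lam (k+1) * dd k * 1 = dd (k+1)
      rw [mul_one]; rfl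

lemma cc_Qs : ∀ k, constantCoeff (Qs k) = 1
  | 0 => by simp [Qs]
  | 1 => by simp [Qs, constantCoeff_X]
  | k+2 => by
      have h1 := cc_Qs (k+1)
      have h0 := cc_Qs k
      show constantCoeff ((1 - C (aa (k+1)) * X) * Qs (k+1) - C (lam (k+1)) * X^2 * Qs k) = 1
      rw [map_sub, map_mul, map_mul, map_mul, map_sub, map_mul, h1, h0]
      simp [constantCoeff_X]

lemma coeff_Qs : ∀ k m, k < m → coeff m (Qs k) = 0
  | 0, m, h => by
      show coeff m (1:ℚ⟦X⟧) = 0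
      rw [PowerSeries.coeff_one]
      simp [Nat.pos_iff_ne_zero.mp h]
  | 1, m, h => by
      show coeff m (1 - C (aa 0) * X) = 0
      rw [map_sub, PowerSeries.coeff_one, PowerSeries.coeff_C_mul, PowerSeries.coeff_X]
      have h1 : m ≠ 0 := by omega
      have h2 : m ≠ 1 := by omega
      simp [h1, h2]
  | k+2, m, h => by
      have e1 := coeff_Qs (k+1)
      have e0 := coeff_Qs k
      have hre : Qs (k+2) = Qs (k+1) - C (aa (k+1)) * (X * Qs (k+1))
          - C (lam (k+1)) * (X * (X * Qs k)) := by
        show (1 - C (aa (k+1)) * X) * Qs (k+1) - C (lam (k+1)) * X^2 * Qs k = _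
        ring
      obtain ⟨m2, rfl⟩ : ∃ m2, m = m2 + 2 := ⟨m - 2, by omega⟩
      rw [hre, map_sub, map_sub, PowerSeries.coeff_C_mul, PowerSeries.coeff_C_mul,
        PowerSeries.coeff_succ_X_mul, show m2+2 = (m2+1)+1 by ring,
        PowerSeries.coeff_succ_X_mul, PowerSeries.coeff_succ_X_mul,
        e1 _ (by omega), e1 _ (by omega), e0 _ (by omega)]
      ring

lemma coeff_us : ∀ k m, k ≤ m → coeff m (us k) = 0
  | 0, m, _ => by
      show coeff m (0:ℚ⟦X⟧) = 0
      simp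
  | 1, m, h => by
      show coeff m (1:ℚ⟦X⟧) = 0
      rw [PowerSeries.coeff_one]
      simp [show m ≠ 0 by omega]
  | k+2, m, h => by
      have e1 := coeff_us (k+1)
      have e0 := coeff_us k
      have hre : us (k+2) = us (k+1) - C (aa (k+1)) * (X * us (k+1))
          - C (lam (k+1)) * (X * (X * us k)) := by
        show (1 - C (aa (k+1)) * X) * us (k+1) - C (lam (k+1)) * X^2 * us k = _
        ring
      obtain ⟨m2, rfl⟩ : ∃ m2, m = m2 + 2 := ⟨m - 2, by omega⟩
      rw [hre, map_sub, map_sub, PowerSeries.coeff_C_mul, PowerSeries.coeff_C_mul,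
        PowerSeries.coeff_succ_X_mul, show m2+2 = (m2+1)+1 by ring,
        PowerSeries.coeff_succ_X_mul, PowerSeries.coeff_succ_X_mul,
        e1 _ (by omega), e1 _ (by omega), e0 _ (by omega)]
      ring

lemma mainE (c : PowerSeries ℚ) (hc : c = 1 + X * c^2) :
    ∀ k, Qs k * Bs c 0 = us k + X^(2*k) * Gs c k
  | 0 => by
      show (1:ℚ⟦X⟧) * Bs c 0 = 0 + X^(2*0) * Gs c 0
      rw [Gs_zero]; ring
  | 1 => by
      have h := key0 c hc
      show (1 - C (aa 0) * X) * Bs c 0 = 1 + X^(2*1) * (C (lam 1) * Gs c 0 * Bs c 1)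
      rw [Gs_zero]
      linear_combination h
  | k+2 => by
      have E1 := mainE c hc (k+1)
      have E0 := mainE c hc k
      have K := key c hc k
      have hG1 : Gs c (k+1) = C (lam (k+1)) * Gs c k * Bs c (k+1) := rfl
      show ((1 - C (aa (k+1)) * X) * Qs (k+1) - C (lam (k+1)) * X^2 * Qs k) * Bs c 0
          = ((1 - C (aa (k+1)) * X) * us (k+1) - C (lam (k+1)) * X^2 * us k)
            + X^(2*(k+2)) * (C (lam (k+2)) * Gs c (k+1) * Bs c (k+2))
      linear_combination (1 - C (aa (k+1)) * X) * E1 - C (lam (k+1)) * X^2 * E0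
        + X^(2*k+2) * C (lam (k+1)) * Gs c k * K
        + ((1 - C (aa (k+1)) * X) * X^(2*k+2)
          - C (lam (k+2)) * X^(2*k+4) * Bs c (k+2)) * hG1

lemma dd_fib : ∀ k, dd (k+1) * fq (2*k+1) = fq (2*k+3)
  | 0 => by
      show lam 1 * dd 0 * fq 1 = fq 3
      norm_num [lam, dd, fq]
  | k+1 => by
      have ih := dd_fib k
      have hs := fq_nonneg (2*k)
      have hlt := fq_lt k
      set s := fq (2*k) with hsdef
      set t := fq (2*k+1) with htdef
      have ht : 0 < t := lt_of_le_of_lt hs hlt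
      have h2' : fq (2*k+2) = s + t := fq_add_two _
      have h3' : fq (2*k+3) = s + 2*t := by
        rw [show 2*k+3 = (2*k+1)+2 by ring, fq_add_two,
          show 2*k+1+1 = 2*k+2 by ring, fq_add_two]; ring
      have h4' : fq (2*k+4) = 2*s + 3*t := by
        rw [show 2*k+4 = (2*k+2)+2 by ring, fq_add_two, h2',
          show 2*k+2+1 = 2*k+3 by ring, h3']; ring
      have h5' : fq (2*k+5) = 3*s + 5*t := by
        rw [show 2*k+5 = (2*k+3)+2 by ring, fq_add_two, h3',
          show 2*k+3+1 = 2*k+4 by ring, h4']; ring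
      show dd (k+2) * fq (2*(k+1)+1) = fq (2*(k+1)+3)
      rw [show 2*(k+1)+1 = 2*k+3 by ring, show 2*(k+1)+3 = 2*k+5 by ring, h3', h5']
      show lam (k+2) * dd (k+1) * (s+2*t) = 3*s+5*t
      have hl : lam (k+2) = (3*s + 5*t) * t / (s + 2*t)^2 := by
        simp only [lam, ← hsdef, ← htdef]
      have hne : s + 2*t ≠ 0 := by positivity
      rw [h3'] at ih
      rw [hl, div_mul_eq_mul_div, div_mul_eq_mul_div, div_eq_iff (pow_ne_zero 2 hne)]
      linear_combination (3*s+5*t)*(s+2*t)*ih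

lemma prod_dd (n : ℕ) : ∏ k ∈ Finset.range (n+1), dd k = fq (2*n+1) := by
  induction n with
  | zero =>
      rw [show (0:ℕ)+1 = 1 from rfl, Finset.prod_range_one]
      norm_num [dd, fq]
  | succ n ih =>
      rw [Finset.prod_range_succ, ih]
      have := dd_fib n
      have h : fq (2*n+1) * dd (n+1) = fq (2*n+3) := by linarith [dd_fib n]
      rw [h, show 2*(n+1)+1 = 2*n+3 by ring]



lemma coeff_QB (c : PowerSeries ℚ) (k m : ℕ) (h : k ≤ m) :
    coeff m (Qs k * Bs c 0)
      = ∑ p ∈ Finset.range (k+1), coeff p (Qs k) * coeff (m-p) (Bs c 0) := by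
  rw [PowerSeries.coeff_mul, Finset.Nat.sum_antidiagonal_eq_sum_range_succ_mk]
  symm
  apply Finset.sum_subset (Finset.range_subset_range.mpr (by omega))
  intro p hp hnp
  rw [coeff_Qs k p (by simp only [Finset.mem_range] at hp hnp; omega), zero_mul]

lemma coeff_tri (c : PowerSeries ℚ) (hc : c = 1 + X * c^2) (i k : ℕ) (h : i < k) :
    coeff (k+i) (Qs k * Bs c 0) = 0 := by
  rw [mainE c hc k, map_add, coeff_us k (k+i) (by omega),
    PowerSeries.coeff_X_pow_mul', if_neg (by omega), add_zero]

lemma coeff_diag (c : PowerSeries ℚ) (hc0 : constantCoeff c = 1)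
    (hc : c = 1 + X * c^2) (k : ℕ) :
    coeff (k+k) (Qs k * Bs c 0) = dd k := by
  rw [mainE c hc k, map_add, coeff_us k (k+k) (by omega),
    PowerSeries.coeff_X_pow_mul', if_pos (by omega), show k+k-2*k = 0 by omega,
    PowerSeries.coeff_zero_eq_constantCoeff, cc_Gs c hc0 k, zero_add]

end

end Stmt8aux

open Stmt8aux in
/-- The diagonal sums `b_n = [xⁿ] c²·(1 - x²·c³)⁻¹` of the Riordan array
`(c², x·c³)` have Hankel transform `F_{2n+1}` (Fibonacci numbers). -/
theorem stmt8 (c : PowerSeries ℚ) (hc0 : PowerSeries.constantCoeff c = 1)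
    (hc : c = 1 + PowerSeries.X * c ^ 2)
    (b : ℕ → ℚ)
    (hb : ∀ n, b n = PowerSeries.coeff n (c ^ 2 * (1 - PowerSeries.X ^ 2 * c ^ 3)⁻¹)) :
    ∀ n : ℕ,
      (Matrix.of fun i j : Fin (n + 1) => b ((i : ℕ) + (j : ℕ))).det =
        (Nat.fib (2 * n + 1) : ℚ) := by
  intro n
  have hb' : ∀ m, b m = coeff m (Bs c 0) := hb
  set U : Matrix (Fin (n+1)) (Fin (n+1)) ℚ :=
    Matrix.of (fun k j : Fin (n+1) =>
      if (j:ℕ) ≤ (k:ℕ) then coeff ((k:ℕ)-(j:ℕ)) (Qs (k:ℕ)) else 0) with hUdef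
  have hUtri : ∀ i j : Fin (n+1), i < j → U i j = 0 := by
    intro i j hij
    simp only [hUdef, Matrix.of_apply]
    rw [if_neg]
    rw [Fin.lt_def] at hij
    omega
  have hUdet : U.det = 1 := by
    rw [Matrix.det_of_lowerTriangular U (fun i j hij => hUtri i j hij)]
    apply Finset.prod_eq_one
    intro k _
    simp only [hUdef, Matrix.of_apply, if_pos (le_refl _), Nat.sub_self,
      PowerSeries.coeff_zero_eq_constantCoeff]
    exact cc_Qs (k:ℕ)
  set H : Matrix (Fin (n+1)) (Fin (n+1)) ℚ :=
    Matrix.of (fun i j : Fin (n+1) => b ((i : ℕ) + (j : ℕ))) with hHdef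
  have hL : ∀ i k : Fin (n+1), (H * U.transpose) i k
      = coeff ((k:ℕ)+(i:ℕ)) (Qs (k:ℕ) * Bs c 0) := by
    intro i k
    rw [Matrix.mul_apply]
    have hstep1 : ∀ j : Fin (n+1), H i j * U.transpose j k
        = (fun jn : ℕ => if jn ≤ (k:ℕ) then coeff ((k:ℕ)-jn) (Qs (k:ℕ)) * b ((i:ℕ)+jn) else 0)
          ((j:ℕ)) := by
      intro j
      simp only [hHdef, hUdef, Matrix.transpose_apply, Matrix.of_apply]
      split_ifs with hle
      · ring
      · ring
    rw [Finset.sum_congr rfl (fun j _ => hstep1 j), Fin.sum_univ_eq_sum_range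
      (fun jn : ℕ => if jn ≤ (k:ℕ) then coeff ((k:ℕ)-jn) (Qs (k:ℕ)) * b ((i:ℕ)+jn) else 0)
      (n+1)]
    rw [← Finset.sum_subset (Finset.range_subset_range.mpr (show (k:ℕ)+1 ≤ n+1 by omega))
        (fun p hp hnp => if_neg (by simp only [Finset.mem_range] at hp hnp; omega))]
    rw [coeff_QB c (k:ℕ) ((k:ℕ)+(i:ℕ)) (by omega)]
    rw [← Finset.sum_range_reflect
      (fun p => coeff p (Qs (k:ℕ)) * coeff ((k:ℕ)+(i:ℕ)-p) (Bs c 0)) ((k:ℕ)+1)]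
    apply Finset.sum_congr rfl
    intro j hj
    have hjk : j ≤ (k:ℕ) := by simp only [Finset.mem_range] at hj; omega
    rw [if_pos hjk]
    have e1 : (k:ℕ)+1-1-j = (k:ℕ)-j := by omega
    have e2 : (k:ℕ)+(i:ℕ)-((k:ℕ)-j) = (i:ℕ)+j := by omega
    rw [e1, e2, hb' ((i:ℕ)+j)]
  have hLtri : ∀ i j : Fin (n+1), i < j → (H * U.transpose) i j = 0 := by
    intro i j hij
    rw [hL i j]
    exact coeff_tri c hc (i:ℕ) (j:ℕ) (by rw [Fin.lt_def] at hij; omega)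
  have hdet2 : (H * U.transpose).det = ∏ k : Fin (n+1), dd (k:ℕ) := by
    rw [Matrix.det_of_lowerTriangular _ (fun i j hij => hLtri i j hij)]
    apply Finset.prod_congr rfl
    intro k _
    rw [hL k k, coeff_diag c hc0 hc (k:ℕ)]
  have hfinal : H.det = ∏ k : Fin (n+1), dd (k:ℕ) := by
    rw [← hdet2, Matrix.det_mul, Matrix.det_transpose, hUdet, mul_one]
  rw [hfinal, Fin.prod_univ_eq_prod_range (fun k => dd k) (n+1), prod_dd n]
  rfl
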